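/- Let n ≥ 1 and let 0 < λ ≤ Λ < ∞. Let A be a (real) linear map on ℝⁿ that is normal, i.e. A commutes with its adjoint A* (equivalently A*A = AA*), and satisfies the ellipticity bounds λ‖v‖² ≤ ⟨A v, v⟩ for all v ∈ ℝⁿ, and ‖A‖ ≤ Λ in operator norm. Then the map I + A is invertible, and there exists a constant M = M(λ, Λ) < 1, depending only on λ and Λ, such that the Cayley transform 𝓜 = (I − A) ∘ (I + A)⁻¹ satisfies ‖𝓜‖ ≤ M in operator norm. -/

import Mathlib

open scoped RealInnerProductSpace

private lemma cayley_aux (lam Lam a b t : ℝ) (hlam : 0 < lam) (hlamLam : lam ≤ Lam)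
    (ha : 0 ≤ a) (hb : 0 ≤ b) (hbA : b ≤ Lam * a)
    (htl : lam * a ^ 2 ≤ t) (hth : t ≤ b * a) :
    a ^ 2 - 2 * t + b ^ 2 ≤ (1 - 4 * lam / (1 + Lam) ^ 2) * (a ^ 2 + 2 * t + b ^ 2) := by
  have hL : (0:ℝ) < 1 + Lam := by linarith
  set c : ℝ := 4 * lam / (1 + Lam) ^ 2 with hc_def
  have hc_pos : 0 < c := by positivity
  have hc_mul : c * (1 + Lam) ^ 2 = 4 * lam := by rw [hc_def]; exact div_mul_cancel₀ _ (by positivity)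
  have hsum : a ^ 2 + 2 * t + b ^ 2 ≤ (1 + Lam) ^ 2 * a ^ 2 := by
    nlinarith [mul_le_mul_of_nonneg_right hbA ha,
      mul_le_mul hbA hbA hb (by nlinarith : (0:ℝ) ≤ Lam * a)]
  have h3 : c * (a ^ 2 + 2 * t + b ^ 2) ≤ 4 * t := by
    calc c * (a ^ 2 + 2 * t + b ^ 2) ≤ c * ((1 + Lam) ^ 2 * a ^ 2) :=
          mul_le_mul_of_nonneg_left hsum hc_pos.le
      _ = 4 * lam * a ^ 2 := by rw [← mul_assoc, hc_mul]
      _ ≤ 4 * t := by nlinarith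
  nlinarith

set_option maxHeartbeats 1000000 in
/-- **Cayley transform estimate** (Lemma A.3 of [D]): if `A` is a normal linear map
on `ℝⁿ` satisfying the ellipticity bounds `λ‖v‖² ≤ ⟨Av, v⟩` and `‖A‖ ≤ Λ`, then
`I + A` is invertible and the Cayley transform `𝓜 = (I − A)(I + A)⁻¹` satisfies
`‖𝓜‖ ≤ M` for some constant `M = M(λ, Λ) < 1` depending only on `λ` and `Λ`. -/
theorem cayley_transform_norm_lt_one (n : ℕ) (hn : 1 ≤ n)
    (lam Lam : ℝ) (hlam : 0 < lam) (hlamLam : lam ≤ Lam) :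
    ∃ M : ℝ, M < 1 ∧
      ∀ A : EuclideanSpace ℝ (Fin n) →L[ℝ] EuclideanSpace ℝ (Fin n),
        (ContinuousLinearMap.adjoint A) * A = A * (ContinuousLinearMap.adjoint A) →
        (∀ v : EuclideanSpace ℝ (Fin n), lam * ‖v‖ ^ 2 ≤ ⟪A v, v⟫) →
        ‖A‖ ≤ Lam →
        IsUnit (1 + A) ∧ ‖(1 - A) * Ring.inverse (1 + A)‖ ≤ M := by
  set E := EuclideanSpace ℝ (Fin n)
  have hL : (0:ℝ) < 1 + Lam := by linarith
  set c : ℝ := 4 * lam / (1 + Lam) ^ 2 with hc_def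
  have hc_pos : 0 < c := by positivity
  have hc_mul : c * (1 + Lam) ^ 2 = 4 * lam := by
    rw [hc_def]; exact div_mul_cancel₀ _ (by positivity)
  have hc_le_one : c ≤ 1 := by
    rw [hc_def, div_le_one (by positivity)]
    nlinarith [sq_nonneg (1 - Lam)]
  set M : ℝ := Real.sqrt (1 - c) with hM_def
  have hM_nonneg : 0 ≤ M := Real.sqrt_nonneg _
  have hM_sq : M ^ 2 = 1 - c := Real.sq_sqrt (by linarith)
  refine ⟨M, ?_, ?_⟩
  · have : M ^ 2 < 1 := by rw [hM_sq]; linarith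
    nlinarith
  intro A _ hell hΛ
  -- key pointwise estimate
  have key : ∀ w : E, ‖(1 - A) w‖ ≤ M * ‖(1 + A) w‖ := by
    intro w
    have h1 : (1 - A) w = w - A w := by simp
    have h2 : (1 + A) w = w + A w := by simp
    rw [h1, h2]
    set a := ‖w‖ with ha_def
    set b := ‖A w‖ with hb_def
    set t := ⟪A w, w⟫ with ht_def
    have ha : 0 ≤ a := norm_nonneg _
    have hb0 : 0 ≤ b := norm_nonneg _
    have hbA : b ≤ Lam * a := by
      calc b ≤ ‖A‖ * a := A.le_opNorm w
        _ ≤ Lam * a := by nlinarith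
    have ht_low : lam * a ^ 2 ≤ t := hell w
    have ht_hi : t ≤ b * a := by
      calc t ≤ ‖A w‖ * ‖w‖ := real_inner_le_norm _ _
        _ = b * a := rfl
    have hsub : ‖w - A w‖ ^ 2 = a ^ 2 - 2 * t + b ^ 2 := by
      rw [norm_sub_sq_real, real_inner_comm (A w) w]
    have hadd : ‖w + A w‖ ^ 2 = a ^ 2 + 2 * t + b ^ 2 := by
      rw [norm_add_sq_real, real_inner_comm (A w) w]
    have hsq : ‖w - A w‖ ^ 2 ≤ (M * ‖w + A w‖) ^ 2 := by
      rw [mul_pow, hM_sq, hsub, hadd]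
      exact cayley_aux lam Lam a b t hlam hlamLam ha hb0 hbA ht_low ht_hi
    have := Real.sqrt_le_sqrt hsq
    rwa [Real.sqrt_sq (norm_nonneg _), Real.sqrt_sq (by positivity)] at this
  -- injectivity of 1 + A
  have hinj : Function.Injective (1 + A : E →L[ℝ] E) := by
    intro x y hxy
    have h0 : (1 + A) (x - y) = 0 := by
      have : (1 + A) x = (1 + A) y := hxy
      rw [map_sub, this, sub_self]
    have h1 : (0:ℝ) = ⟪(1 + A) (x - y), x - y⟫ := by rw [h0]; simp
    have h2 : ⟪(1 + A) (x - y), x - y⟫ = ‖x - y‖ ^ 2 + ⟪A (x - y), x - y⟫ := by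
      simp only [ContinuousLinearMap.add_apply, ContinuousLinearMap.one_apply, inner_add_left]
      rw [real_inner_self_eq_norm_sq]
    have h3 := hell (x - y)
    have h4 : ‖x - y‖ ^ 2 ≤ 0 := by nlinarith
    have h5 : ‖x - y‖ = 0 := by nlinarith [sq_nonneg ‖x - y‖, norm_nonneg (x - y)]
    exact sub_eq_zero.mp (norm_eq_zero.mp h5)
  have hbij : Function.Bijective (1 + A : E →L[ℝ] E) := by
    refine ⟨hinj, ?_⟩
    have := (LinearMap.injective_iff_surjective
      (f := ((1 + A : E →L[ℝ] E) : E →ₗ[ℝ] E))).mp hinj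
    exact this
  have hu : IsUnit (1 + A : E →L[ℝ] E) :=
    ContinuousLinearMap.isUnit_iff_bijective.mpr hbij
  refine ⟨hu, ?_⟩
  have hcancel : (1 + A) * Ring.inverse (1 + A) = 1 := Ring.mul_inverse_cancel _ hu
  refine ContinuousLinearMap.opNorm_le_bound _ hM_nonneg fun u => ?_
  have happ : (1 + A) (Ring.inverse (1 + A) u) = u := by
    have := congrArg (fun T : E →L[ℝ] E => T u) hcancel
    simpa [ContinuousLinearMap.mul_apply] using this
  calc ‖((1 - A) * Ring.inverse (1 + A)) u‖
      = ‖(1 - A) (Ring.inverse (1 + A) u)‖ := by rw [ContinuousLinearMap.mul_apply]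
    _ ≤ M * ‖(1 + A) (Ring.inverse (1 + A) u)‖ := key _
    _ = M * ‖u‖ := by rw [happ]
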